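/- Property (vi) fails for the discrete p-laplacian in dimension d = 3 when p > 2: Let p > 2 and let Γ satisfy 1 < Γ < (2 − 3^{2−p})^{1/(p−1)}. Set t = ((Γ−1)/3^{1/(p−1)})·(2·Γ^{1−p} − 1)^{1/(p−1)}. Then Γ^{-1} ≤ 1 + t ≤ Γ, F_p(Γ, Γ^{-1}, Γ^{-1}, 1+t, 1+t, 1+t) = 1 (i.e. sign(1−Γ)·|1−Γ|^{p−1} + 2·sign(1−Γ^{-1})·|1−Γ^{-1}|^{p−1} − 3·t^{p−1} = 0), and (Γ^{-1} + 3(1+t))/4 > 1. -/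

import Mathlib

/-- `signPow p s = sign(s) · |s|^(p-1)`, i.e. `s·|s|^(p-2)` for `s ≠ 0` and `0` for `s = 0`. -/
noncomputable def signPow (p s : ℝ) : ℝ := Real.sign s * |s| ^ (p - 1)

/-- Property (vi) fails for the discrete `p`-laplacian in dimension `d = 3` when `p > 2`. -/
theorem property_vi_fails_plaplacian_d3 (p : ℝ) (hp : 2 < p) (Γ : ℝ) (hΓ1 : 1 < Γ)
    (hΓ2 : Γ < (2 - 3 ^ ((2 : ℝ) - p)) ^ ((1 : ℝ) / (p - 1))) :
    let t : ℝ := ((Γ - 1) / 3 ^ ((1 : ℝ) / (p - 1))) *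
      (2 * Γ ^ ((1 : ℝ) - p) - 1) ^ ((1 : ℝ) / (p - 1))
    Γ⁻¹ ≤ 1 + t ∧ 1 + t ≤ Γ ∧
      signPow p (1 - Γ) + 2 * signPow p (1 - Γ⁻¹) - 3 * t ^ (p - 1) = 0 ∧
      1 < (Γ⁻¹ + 3 * (1 + t)) / 4 := by
  intro t
  have ht : t = ((Γ - 1) / 3 ^ ((1 : ℝ) / (p - 1))) *
      (2 * Γ ^ ((1 : ℝ) - p) - 1) ^ ((1 : ℝ) / (p - 1)) := rfl
  set q : ℝ := p - 1 with hq
  have hq1 : 1 < q := by simp only [hq]; linarith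
  have hq0 : 0 < q := by linarith
  have hqne : q ≠ 0 := ne_of_gt hq0
  have hΓ0 : (0:ℝ) < Γ := by linarith
  have hΓq1 : (1:ℝ) < Γ ^ q := (Real.one_lt_rpow_iff_of_pos hΓ0).mpr (Or.inl ⟨hΓ1, hq0⟩)
  have hΓqpos : (0:ℝ) < Γ ^ q := by linarith
  have hΓqne : Γ ^ q ≠ 0 := ne_of_gt hΓqpos
  -- 3^(2-p) = 3 / 3^q
  have h3qpos : (0:ℝ) < (3:ℝ) ^ q := Real.rpow_pos_of_pos (by norm_num) q
  have h3q : (3:ℝ) ^ ((2:ℝ) - p) = 3 / 3 ^ q := by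
    rw [show (2:ℝ) - p = 1 - q from by rw [hq]; ring, Real.rpow_sub (by norm_num),
      Real.rpow_one]
  -- Γ^q < 2 - 3/3^q
  have hΓqB : Γ ^ q < 2 - 3 / 3 ^ q := by
    have h := Real.rpow_lt_rpow hΓ0.le hΓ2 hq0
    have hBpos : (0:ℝ) ≤ 2 - 3 ^ ((2:ℝ) - p) := by
      have : (3:ℝ) ^ ((2:ℝ) - p) < 1 :=
        Real.rpow_lt_one_of_one_lt_of_neg (by norm_num) (by linarith)
      linarith
    rwa [← Real.rpow_mul hBpos, one_div_mul_cancel hqne, Real.rpow_one, h3q] at h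
  have hΓq2 : Γ ^ q < 2 := by
    have : (0:ℝ) < 3 / 3 ^ q := by positivity
    linarith
  -- Γ^(1-p) = (Γ^q)⁻¹
  have hΓinv : Γ ^ ((1:ℝ) - p) = (Γ ^ q)⁻¹ := by
    rw [show (1:ℝ) - p = -q from by rw [hq]; ring, Real.rpow_neg hΓ0.le]
  set A : ℝ := 2 * Γ ^ ((1:ℝ) - p) - 1 with hA
  have hAval : A = 2 * (Γ ^ q)⁻¹ - 1 := by rw [hA, hΓinv]
  have hApos : 0 < A := by
    rw [hAval]
    nlinarith [inv_mul_cancel₀ hΓqne, inv_pos.mpr hΓqpos]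
  have hA3 : A ≤ 3 := by
    rw [hAval]
    have : (Γ ^ q)⁻¹ < 1 := by
      rw [inv_lt_one_iff₀]; right; exact hΓq1
    linarith
  have h31qpos : (0:ℝ) < (3:ℝ) ^ ((1:ℝ)/q) := Real.rpow_pos_of_pos (by norm_num) _
  have ht0 : 0 < t := by
    rw [ht]
    have hA1q : (0:ℝ) < A ^ ((1:ℝ)/q) := Real.rpow_pos_of_pos hApos _
    have : (0:ℝ) < (Γ - 1) / 3 ^ ((1:ℝ)/q) := by
      exact div_pos (by linarith) h31qpos
    exact mul_pos this hA1q
  -- t^q = (Γ-1)^q / 3 * A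
  have hroot : ∀ x : ℝ, 0 ≤ x → (x ^ ((1:ℝ)/q)) ^ q = x := by
    intro x hx
    rw [← Real.rpow_mul hx, one_div_mul_cancel hqne, Real.rpow_one]
  have htq : t ^ q = (Γ - 1) ^ q / 3 * A := by
    rw [ht, Real.mul_rpow (div_nonneg (by linarith) h31qpos.le) (Real.rpow_nonneg hApos.le _),
      Real.div_rpow (by linarith) h31qpos.le, hroot 3 (by norm_num), hroot A hApos.le]
  -- signPow values
  have hsign1 : signPow p (1 - Γ) = -((Γ - 1) ^ q) := by
    unfold signPow
    rw [Real.sign_of_neg (by linarith), abs_of_neg (by linarith)]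
    rw [hq]; ring_nf
  have hΓinv1 : Γ⁻¹ < 1 := by
    rw [inv_lt_one_iff₀]; right; exact hΓ1
  have hsub : (1:ℝ) - Γ⁻¹ = (Γ - 1) / Γ := by field_simp
  have hsign2 : signPow p (1 - Γ⁻¹) = (Γ - 1) ^ q / Γ ^ q := by
    unfold signPow
    rw [Real.sign_of_pos (by linarith), abs_of_pos (by linarith), one_mul, hsub,
      Real.div_rpow (by linarith) hΓ0.le]
  refine ⟨by linarith, ?_, ?_, ?_⟩
  · -- 1 + t ≤ Γ
    have hA1q : A ^ ((1:ℝ)/q) ≤ 3 ^ ((1:ℝ)/q) :=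
      Real.rpow_le_rpow hApos.le hA3 (by positivity)
    have : t ≤ (Γ - 1) / 3 ^ ((1:ℝ)/q) * 3 ^ ((1:ℝ)/q) := by
      rw [ht]
      exact mul_le_mul_of_nonneg_left hA1q (div_nonneg (by linarith) h31qpos.le)
    rw [div_mul_cancel₀ _ (ne_of_gt h31qpos)] at this
    linarith
  · -- the equation
    rw [hsign1, hsign2, htq, hAval]
    field_simp
    ring
  · -- 1 < (Γ⁻¹ + 3(1+t))/4
    have key : 1 - Γ⁻¹ < 3 * t := by
      by_contra h
      push_neg at h
      have h1 : (3 * t) ^ q ≤ (1 - Γ⁻¹) ^ q :=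
        Real.rpow_le_rpow (by positivity) h hq0.le
      have h2 : (3 * t) ^ q = 3 ^ q * ((Γ - 1) ^ q / 3 * A) := by
        rw [Real.mul_rpow (by norm_num) ht0.le, htq]
      have h3 : ((1:ℝ) - Γ⁻¹) ^ q = (Γ - 1) ^ q / Γ ^ q := by
        rw [hsub, Real.div_rpow (by linarith) hΓ0.le]
      rw [h2, h3] at h1
      have hD : (0:ℝ) < (Γ - 1) ^ q := Real.rpow_pos_of_pos (by linarith) _
      have hAG : A * Γ ^ q = 2 - Γ ^ q := by rw [hAval]; field_simp
      have hm := mul_le_mul_of_nonneg_right h1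
        (by positivity : (0:ℝ) ≤ 3 * Γ ^ q / (Γ - 1) ^ q)
      have e1 : 3 ^ q * ((Γ - 1) ^ q / 3 * A) * (3 * Γ ^ q / (Γ - 1) ^ q)
          = 3 ^ q * (A * Γ ^ q) := by field_simp
      have e2 : (Γ - 1) ^ q / Γ ^ q * (3 * Γ ^ q / (Γ - 1) ^ q) = 3 := by field_simp
      rw [e1, e2, hAG] at hm
      have h5 : (3:ℝ) < 3 ^ q * (2 - Γ ^ q) := by
        have hlt : (3:ℝ) ^ q * (3 / 3 ^ q) < 3 ^ q * (2 - Γ ^ q) :=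
          mul_lt_mul_of_pos_left (by linarith) h3qpos
        have e : (3:ℝ) ^ q * (3 / 3 ^ q) = 3 := by field_simp
        linarith
      linarith
    linarith
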